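/- If β is a Pisot number, then every element x of ℚ(β) ∩ I_{−β} has an eventually periodic (−β)-expansion d_{−β}(x). -/

import Mathlib

/-- A Pisot number: an algebraic integer `β > 1` all of whose other complex conjugates
have modulus strictly less than `1`. -/
def IsPisot (β : ℝ) : Prop :=
  1 < β ∧ IsIntegral ℤ β ∧
    ∀ z : ℂ, Polynomial.aeval z (minpoly ℤ β) = 0 → z ≠ (β : ℂ) → ‖z‖ < 1

/-- The (-β)-transformation `T_{-β}(x) = -βx - ⌊-βx + β/(β+1)⌋`. -/
noncomputable def negBetaT (β : ℝ) (x : ℝ) : ℝ :=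
  -β * x - ⌊-β * x + β / (β + 1)⌋

/-- The digits of the (-β)-expansion: `negBetaDigit β x n` is the digit
`x_{n+1} = ⌊-β T_{-β}^n(x) + β/(β+1)⌋`. -/
noncomputable def negBetaDigit (β : ℝ) (x : ℝ) (n : ℕ) : ℤ :=
  ⌊-β * (negBetaT β)^[n] x + β / (β + 1)⌋

lemma negBetaT_mem (β : ℝ) (hβ : 1 < β) (z : ℝ) :
    negBetaT β z ∈ Set.Ico (-β / (β + 1)) (1 / (β + 1)) := by
  have h1 : (0:ℝ) < β + 1 := by linarith
  have hfr0 := Int.fract_nonneg (-β * z + β / (β + 1))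
  have hfr1 := Int.fract_lt_one (-β * z + β / (β + 1))
  have heq : negBetaT β z = Int.fract (-β * z + β / (β + 1)) - β / (β + 1) := by
    rw [Int.fract, negBetaT]; ring
  have hsum : β / (β + 1) + 1 / (β + 1) = 1 := by field_simp
  constructor
  · rw [heq]; rw [neg_div]; linarith
  · rw [heq]; linarith

lemma abs_le_one_of_memI {β : ℝ} (hβ : 1 < β) {z : ℝ}
    (hz : z ∈ Set.Ico (-β / (β + 1)) (1 / (β + 1))) : |z| ≤ 1 := by
  have h1 : (0:ℝ) < β + 1 := by linarith
  obtain ⟨hl, hr⟩ := hz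
  rw [neg_div] at hl
  have h2 : β / (β + 1) ≤ 1 := by rw [div_le_one h1]; linarith
  have h3 : 1 / (β + 1) ≤ 1 := by rw [div_le_one h1]; linarith
  rw [abs_le]; constructor <;> linarith

/-- If `β` is a Pisot number, then every `x ∈ ℚ(β) ∩ I_{-β}` has an eventually periodic
(-β)-expansion. -/
theorem eventually_periodic_negBetaExpansion_of_pisot (β : ℝ) (hβ : IsPisot β)
    (x : ℝ) (hxQ : x ∈ Algebra.adjoin ℚ ({β} : Set ℝ))
    (hxI : x ∈ Set.Ico (-β / (β + 1)) (1 / (β + 1))) :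
    ∃ m p : ℕ, 0 < p ∧ ∀ n ≥ m, negBetaDigit β x (n + p) = negBetaDigit β x n := by
  classical
  obtain ⟨hβ1, hβint, hconj⟩ := hβ
  have h1 : (0:ℝ) < β + 1 := by linarith
  set K := IntermediateField.adjoin ℚ ({β} : Set ℝ) with hKdef
  have hβK : β ∈ K := IntermediateField.subset_adjoin ℚ _ (Set.mem_singleton β)
  have hxK : x ∈ K := IntermediateField.algebra_adjoin_le_adjoin ℚ _ hxQ
  set b : K := ⟨β, hβK⟩ with hbdef
  have hβQ : IsIntegral ℚ β := hβint.tower_top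
  haveI : FiniteDimensional ℚ K := IntermediateField.adjoin.finiteDimensional hβQ
  haveI : NumberField K := ⟨⟩
  have hinj : Function.Injective (algebraMap K ℝ) := (algebraMap K ℝ).injective
  have hbint : IsIntegral ℤ b := by
    rw [← isIntegral_algebraMap_iff (A := K) (B := ℝ) hinj]
    exact hβint
  -- step function
  set F : K → K := fun z => -b * z - (⌊-β * (z:ℝ) + β / (β + 1)⌋ : ℤ) with hFdef
  set Y : ℕ → K := fun n => F^[n] ⟨x, hxK⟩ with hYdef
  have hYsucc : ∀ n, Y (n+1) = F (Y n) := by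
    intro n; simp only [hYdef, Function.iterate_succ_apply']
  have hYval : ∀ n, ((Y n : K) : ℝ) = (negBetaT β)^[n] x := by
    intro n
    induction n with
    | zero => rfl
    | succ n ih =>
      rw [hYsucc n, Function.iterate_succ_apply']
      show ((-b * (Y n) - ((⌊-β * ((Y n : K):ℝ) + β / (β + 1)⌋ : ℤ) : K) : K) : ℝ) = _
      push_cast
      rw [ih, negBetaT]
  have hvI : ∀ n, |((Y n : K) : ℝ)| ≤ 1 := by
    intro n
    rw [hYval]
    cases n with
    | zero => exact abs_le_one_of_memI hβ1 hxI
    | succ n =>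
      rw [Function.iterate_succ_apply']
      exact abs_le_one_of_memI hβ1 (negBetaT_mem β hβ1 _)
  -- digit bound
  have hdig : ∀ n, |((⌊-β * ((Y n : K):ℝ) + β / (β + 1)⌋ : ℤ) : ℝ)| ≤ β + 2 := by
    intro n
    set t := -β * ((Y n : K):ℝ) + β / (β + 1) with ht
    have h2 : β / (β + 1) ≤ 1 := by rw [div_le_one h1]; linarith
    have h3 : (0:ℝ) ≤ β / (β + 1) := by positivity
    have habs : |(-β * ((Y n : K):ℝ))| ≤ β := by
      rw [abs_mul, abs_neg, abs_of_pos (by linarith : (0:ℝ) < β)]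
      calc β * |((Y n : K):ℝ)| ≤ β * 1 := by
            exact mul_le_mul_of_nonneg_left (hvI n) (by linarith)
        _ = β := mul_one β
    have habs' := abs_le.mp habs
    have hfl := Int.floor_le t
    have hfl' := Int.lt_floor_add_one t
    rw [abs_le]; constructor <;> [skip; skip] <;>
      simp only [ht] at hfl hfl' <;> push_cast at hfl hfl' ⊢ <;> linarith [habs'.1, habs'.2]
  -- all conjugates bounded
  have hroot : ∀ φ : K →+* ℂ, φ b = (β:ℂ) ∨ ‖φ b‖ < 1 := by
    intro φ
    by_cases h : φ b = (β:ℂ)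
    · exact Or.inl h
    · refine Or.inr (hconj (φ b) ?_ h)
      have hmp : minpoly ℤ β = minpoly ℤ b := by
        have := minpoly.algebraMap_eq (A := ℤ) hinj b
        simpa using this
      rw [hmp]
      have : Polynomial.aeval (φ b) (minpoly ℤ b) =
          φ (Polynomial.aeval b (minpoly ℤ b)) := by
        rw [Polynomial.aeval_def, Polynomial.aeval_def, Polynomial.hom_eval₂]
        congr 1
        exact Subsingleton.elim _ _
      rw [this, minpoly.aeval, map_zero]
  -- the real embedding case
  have hreal : ∀ φ : K →+* ℂ, φ b = (β:ℂ) → ∀ y : K, φ y = ((y : ℝ) : ℂ) := by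
    intro φ hφ y
    have hy' : (y : ℝ) ∈ Algebra.adjoin ℚ ({β} : Set ℝ) := by
      rw [← IntermediateField.adjoin_simple_toSubalgebra_of_isAlgebraic hβQ.isAlgebraic]
      exact y.2
    have key : ∀ (r : ℝ), r ∈ Algebra.adjoin ℚ ({β} : Set ℝ) →
        ∀ h : r ∈ K, φ ⟨r, h⟩ = (r : ℂ) := by
      intro r hr
      induction hr using Algebra.adjoin_induction with
      | mem r hr =>
        intro h
        rcases hr with rfl
        have : (⟨r, h⟩ : K) = b := rfl
        rw [this, hφ]
      | algebraMap q =>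
        intro h
        have : (⟨algebraMap ℚ ℝ q, h⟩ : K) = algebraMap ℚ K q := rfl
        rw [this]
        rw [show (algebraMap ℚ K q : K) = (q : K) from rfl, map_ratCast]
        norm_cast
      | add r s hr hs ihr ihs =>
        intro h
        have hrK : r ∈ K := IntermediateField.algebra_adjoin_le_adjoin ℚ _ hr
        have hsK : s ∈ K := IntermediateField.algebra_adjoin_le_adjoin ℚ _ hs
        have : (⟨r + s, h⟩ : K) = ⟨r, hrK⟩ + ⟨s, hsK⟩ := rfl
        rw [this, map_add, ihr hrK, ihs hsK]; push_cast; ring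
      | mul r s hr hs ihr ihs =>
        intro h
        have hrK : r ∈ K := IntermediateField.algebra_adjoin_le_adjoin ℚ _ hr
        have hsK : s ∈ K := IntermediateField.algebra_adjoin_le_adjoin ℚ _ hs
        have : (⟨r * s, h⟩ : K) = ⟨r, hrK⟩ * ⟨s, hsK⟩ := rfl
        rw [this, map_mul, ihr hrK, ihs hsK]; push_cast; ring
    have := key (y : ℝ) hy' y.2
    simpa using this
  -- per-embedding bound
  have hbound : ∀ φ : K →+* ℂ, ∃ Cφ : ℝ, 0 ≤ Cφ ∧ ∀ n, ‖φ (Y n)‖ ≤ Cφ := by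
    intro φ
    rcases hroot φ with hφ | hφ
    · refine ⟨1, zero_le_one, fun n => ?_⟩
      rw [hreal φ hφ (Y n)]
      rw [Complex.norm_real]
      exact hvI n
    · set cφ := ‖φ b‖ with hcφ
      have hc0 : 0 ≤ cφ := norm_nonneg _
      have hc1 : cφ < 1 := hφ
      set M : ℝ := max ‖φ (Y 0)‖ ((β + 2) / (1 - cφ)) with hM
      have hM0 : 0 ≤ M := le_trans (norm_nonneg _) (le_max_left _ _)
      refine ⟨M, hM0, fun n => ?_⟩
      induction n with
      | zero => exact le_max_left _ _
      | succ n ih =>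
        rw [hYsucc n]
        have heq : φ (F (Y n)) = -(φ b) * φ (Y n)
            - ((⌊-β * ((Y n : K):ℝ) + β / (β + 1)⌋ : ℤ) : ℂ) := by
          simp only [hFdef, map_sub, map_mul, map_neg, map_intCast]
        rw [heq]
        have h4 : ‖-(φ b) * φ (Y n) - ((⌊-β * ((Y n : K):ℝ) + β / (β + 1)⌋ : ℤ) : ℂ)‖
            ≤ cφ * ‖φ (Y n)‖ + (β + 2) := by
          refine le_trans (norm_sub_le _ _) ?_
          have h5 : ‖-(φ b) * φ (Y n)‖ = cφ * ‖φ (Y n)‖ := by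
            rw [norm_mul, norm_neg]
          have h6 : ‖((⌊-β * ((Y n : K):ℝ) + β / (β + 1)⌋ : ℤ) : ℂ)‖ ≤ β + 2 := by
            rw [Complex.norm_intCast]
            exact_mod_cast hdig n
          linarith [h5.le, h5.ge]
        refine le_trans h4 ?_
        have h7 : cφ * ‖φ (Y n)‖ ≤ cφ * M := mul_le_mul_of_nonneg_left ih hc0
        have h8 : (β + 2) / (1 - cφ) ≤ M := le_max_right _ _
        have h9 : β + 2 ≤ M * (1 - cφ) := by
          rw [div_le_iff₀ (by linarith)] at h8; linarith
        nlinarith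
  choose C hC0 hC using hbound
  -- integral multiple
  have halgQ : IsAlgebraic ℚ (⟨x, hxK⟩ : K) := (IsIntegral.of_finite ℚ _).isAlgebraic
  have halg : IsAlgebraic ℤ (⟨x, hxK⟩ : K) :=
    (IsFractionRing.isAlgebraic_iff ℤ ℚ K).mpr halgQ
  obtain ⟨Nx, N, hN0, hNx⟩ : ∃ Nx : integralClosure ℤ K, ∃ N : ℤ, N ≠ 0 ∧
      (N : K) * (⟨x, hxK⟩ : K) = Nx := by
    obtain ⟨N, hN0, hNint⟩ := halg.exists_integral_multiple
    exact ⟨⟨_, hNint⟩, N, hN0, (zsmul_eq_mul _ _).symm⟩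
  -- integrality of orbit
  have hint : ∀ n, IsIntegral ℤ ((N : K) * Y n) := by
    intro n
    induction n with
    | zero =>
      have : (N : K) * Y 0 = (Nx : K) := by
        rw [← hNx]; rfl
      rw [this]
      exact Nx.2
    | succ n ih =>
      rw [hYsucc n]
      have heq2 : (N : K) * F (Y n) =
          -(b * ((N : K) * Y n)) - ((N * ⌊-β * ((Y n : K):ℝ) + β / (β + 1)⌋ : ℤ) : K) := by
        simp only [hFdef]; push_cast; ring
      rw [heq2]
      refine IsIntegral.sub (IsIntegral.neg ?_) ?_
      · exact hbint.mul ih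
      · have : ((N * ⌊-β * ((Y n : K):ℝ) + β / (β + 1)⌋ : ℤ) : K) =
            algebraMap ℤ K (N * ⌊-β * ((Y n : K):ℝ) + β / (β + 1)⌋) := by
          simp
        rw [this]; exact isIntegral_algebraMap
  -- uniform bound
  set B : ℝ := ∑ φ : (K →+* ℂ), C φ with hB
  have hCB : ∀ φ : K →+* ℂ, C φ ≤ B :=
    fun φ => Finset.single_le_sum (fun ψ _ => hC0 ψ) (Finset.mem_univ φ)
  have hfin := NumberField.Embeddings.finite_of_norm_le K ℂ (|(N:ℝ)| * B)
  have hmem : ∀ n, ((N : K) * Y n) ∈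
      {z : K | IsIntegral ℤ z ∧ ∀ φ : K →+* ℂ, ‖φ z‖ ≤ |(N:ℝ)| * B} := by
    intro n
    refine ⟨hint n, fun φ => ?_⟩
    rw [map_mul]
    have h10 : ‖φ ((N : K) : K)‖ = |(N:ℝ)| := by
      rw [map_intCast, Complex.norm_intCast]
    rw [norm_mul, h10]
    exact mul_le_mul_of_nonneg_left (le_trans (hC φ n) (hCB φ)) (abs_nonneg _)
  -- pigeonhole
  have hpig : ∃ m m' : ℕ, m ≠ m' ∧ (N : K) * Y m = (N : K) * Y m' := by
    obtain ⟨m, -, m', -, hne, heq⟩ :=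
      Set.Infinite.exists_ne_map_eq_of_mapsTo (Set.infinite_univ (α := ℕ))
        (fun n _ => hmem n) hfin
    exact ⟨m, m', hne, heq⟩
  obtain ⟨m0, m1, hne, heqN⟩ := hpig
  have hNK : ((N : K)) ≠ 0 := Int.cast_ne_zero.mpr hN0
  have heqY : Y m0 = Y m1 := mul_left_cancel₀ hNK heqN
  -- wlog m0 < m1
  obtain ⟨m, m', hmm, hYm⟩ : ∃ m m' : ℕ, m < m' ∧ Y m = Y m' := by
    rcases hne.lt_or_gt with h | h
    · exact ⟨m0, m1, h, heqY⟩
    · exact ⟨m1, m0, h, heqY.symm⟩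
  refine ⟨m, m' - m, Nat.sub_pos_of_lt hmm, fun n hn => ?_⟩
  have hYper : Y (n + (m' - m)) = Y n := by
    have h11 : ∀ k j : ℕ, Y (k + j) = F^[k] (Y j) := by
      intro k j; simp only [hYdef, ← Function.iterate_add_apply]
    have h12 : n + (m' - m) = (n - m) + m' := by omega
    have h13 : n = (n - m) + m := by omega
    calc Y (n + (m' - m)) = F^[n - m] (Y m') := by rw [h12, h11 (n - m) m']
      _ = F^[n - m] (Y m) := by rw [← hYm]
      _ = Y n := by rw [← h11 (n - m) m, ← h13]
  have hdigit : ∀ k, negBetaDigit β x k = ⌊-β * ((Y k : K):ℝ) + β / (β + 1)⌋ := by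
    intro k; rw [negBetaDigit, hYval]
  rw [hdigit, hdigit, hYper]
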